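/- Let (Y_t)_{t≥0} be a real-valued stochastic process on a probability space whose sample paths are càdlàg (right-continuous with left limits), and let Y_∞ be a real random variable on the same space. If for every fixed s > 0 the sequence (Y_{ns})_{n∈ℕ} converges in probability to Y_∞ as n → ∞ through the positive integers, then Y_t converges in probability to Y_∞ as t → ∞ through the reals. (Lemma 5.1 of the paper, convergence-in-probability version.) -/

import Mathlib

open MeasureTheory Filter Set
open scoped ENNReal Topology ProbabilityTheory

/-- Lemma 5.1 of the paper (convergence-in-probability version): if a real-valued process
with càdlàg paths satisfies `Y_{ns} → Y_∞` in probability along the integers for every fixed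
`s > 0`, then `Y_t → Y_∞` in probability as `t → ∞` through the reals. -/
theorem stmt3 {Ω : Type*} [MeasureSpace Ω] [IsProbabilityMeasure (ℙ : Measure Ω)]
    (Y : ℝ → Ω → ℝ) (Yinf : Ω → ℝ)
    (hmeas : ∀ t : ℝ, 0 ≤ t → Measurable (Y t)) (hinfmeas : Measurable Yinf)
    -- right-continuity of the paths at every `t ≥ 0`
    (hrc : ∀ ω, ∀ t : ℝ, 0 ≤ t → ContinuousWithinAt (fun s => Y s ω) (Set.Ici t) t)
    -- existence of finite left limits of the paths at every `t > 0`
    (hll : ∀ ω, ∀ t : ℝ, 0 < t →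
      ∃ l : ℝ, Tendsto (fun s => Y s ω) (𝓝[Set.Ico 0 t] t) (𝓝 l))
    -- convergence in probability along every arithmetic sequence
    (hconv : ∀ s : ℝ, 0 < s → ∀ ε : ℝ, 0 < ε →
      Tendsto (fun n : ℕ => ℙ {ω | ε < |Y (n * s) ω - Yinf ω|}) atTop (𝓝 0)) :
    ∀ ε : ℝ, 0 < ε →
      Tendsto (fun t : ℝ => ℙ {ω | ε < |Y t ω - Yinf ω|}) atTop (𝓝 0) := by
  classical
  -- the auxiliary "expected truncated distance" function
  set F : ℝ → Ω → ℝ≥0∞ := fun t ω => ENNReal.ofReal (min |Y t ω - Yinf ω| 1) with hFdef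
  have hFmeas : ∀ t : ℝ, 0 ≤ t → Measurable (F t) := fun t ht =>
    ENNReal.measurable_ofReal.comp ((((hmeas t ht).sub hinfmeas).abs).min measurable_const)
  have hFle : ∀ t ω, F t ω ≤ 1 := by
    intro t ω
    calc F t ω ≤ ENNReal.ofReal 1 := ENNReal.ofReal_le_ofReal (min_le_right _ _)
      _ = 1 := ENNReal.ofReal_one
  set g : ℝ → ℝ≥0∞ := fun t => ∫⁻ ω, F t ω with hgdef
  -- Step (a): `g (n s) → 0` for every fixed `s > 0`.
  have hgs : ∀ s : ℝ, 0 < s → Tendsto (fun n : ℕ => g ((n : ℝ) * s)) atTop (𝓝 0) := by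
    intro s hs
    rw [ENNReal.tendsto_nhds_zero]
    intro η hη
    rcases eq_or_ne η ⊤ with rfl | hηtop
    · exact Eventually.of_forall fun n => le_top
    have hη2 : (0 : ℝ≥0∞) < η / 2 := ENNReal.div_pos hη.ne' (by norm_num)
    have hη2top : η / 2 ≠ ⊤ := (ENNReal.div_lt_top hηtop (by norm_num)).ne
    set ε' := (η / 2).toReal with hε'def
    have hε' : 0 < ε' := ENNReal.toReal_pos hη2.ne' hη2top
    have h1 := (ENNReal.tendsto_nhds_zero.mp (hconv s hs ε' hε')) (η / 2) hη2
    filter_upwards [h1] with n hn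
    have hns : (0 : ℝ) ≤ (n : ℝ) * s := by positivity
    set A : Set Ω := {ω | ε' < |Y ((n : ℝ) * s) ω - Yinf ω|} with hAdef
    have hAmeas : MeasurableSet A :=
      measurableSet_lt measurable_const (((hmeas _ hns).sub hinfmeas).abs)
    have hpt : ∀ ω, F ((n : ℝ) * s) ω ≤
        ENNReal.ofReal ε' + A.indicator (fun _ => (1 : ℝ≥0∞)) ω := by
      intro ω
      by_cases hωA : ω ∈ A
      · rw [Set.indicator_of_mem hωA]
        exact le_add_left (hFle _ _)
      · rw [Set.indicator_of_notMem hωA]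
        have : |Y ((n : ℝ) * s) ω - Yinf ω| ≤ ε' := le_of_not_gt hωA
        rw [add_zero]
        exact ENNReal.ofReal_le_ofReal (le_trans (min_le_left _ _) this)
    calc g ((n : ℝ) * s) ≤ ∫⁻ ω, (ENNReal.ofReal ε' + A.indicator (fun _ => (1 : ℝ≥0∞)) ω) :=
          lintegral_mono hpt
      _ = ENNReal.ofReal ε' + ℙ A := by
          rw [lintegral_add_left measurable_const, lintegral_const, measure_univ, mul_one]
          congr 1
          exact lintegral_indicator_one hAmeas
      _ ≤ η / 2 + η / 2 := by
          refine add_le_add ?_ hn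
          rw [hε'def, ENNReal.ofReal_toReal hη2top]
      _ = η := ENNReal.add_halves η
  -- Step (b): `g` is right-continuous at every `t ≥ 0`.
  have hgc : ∀ t : ℝ, 0 ≤ t → Tendsto g (𝓝[Set.Ici t] t) (𝓝 (g t)) := by
    intro t ht
    apply tendsto_lintegral_filter_of_dominated_convergence (fun _ => (1 : ℝ≥0∞))
    · filter_upwards [self_mem_nhdsWithin] with u hu
      exact hFmeas u (le_trans ht hu)
    · exact Eventually.of_forall fun u => ae_of_all _ fun ω => hFle u ω
    · simp
    · refine ae_of_all _ fun ω => ?_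
      have hc : Continuous fun x : ℝ => ENNReal.ofReal (min |x - Yinf ω| 1) :=
        ENNReal.continuous_ofReal.comp
          (((continuous_id.sub continuous_const).abs).min continuous_const)
      exact (hc.tendsto _).comp (hrc ω t ht)
  -- Step (c): Croft-type lemma via Baire category: `g t → 0` as `t → ∞`.
  have key : Tendsto g atTop (𝓝 0) := by
    by_contra hcon
    rw [ENNReal.tendsto_nhds_zero] at hcon
    push_neg at hcon
    obtain ⟨η, hη, hfreq⟩ := hcon
    have hfreq' : ∀ k : ℕ, ∃ u : ℝ, (k : ℝ) + 1 ≤ u ∧ η < g u := by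
      intro k
      obtain ⟨u, hu1, hu2⟩ := frequently_atTop.mp hfreq ((k : ℝ) + 1)
      exact ⟨u, hu1, hu2⟩
    choose t ht hgt using hfreq'
    have htpos : ∀ k, (0 : ℝ) < t k := fun k =>
      lt_of_lt_of_le (by positivity) (ht k)
    -- right-continuity gives intervals on which `g` stays above `η`
    have hδex : ∀ k : ℕ, ∃ δ : ℝ, 0 < δ ∧ ∀ u, t k ≤ u → u < t k + δ → η < g u := by
      intro k
      have hev : ∀ᶠ u in 𝓝[Set.Ici (t k)] (t k), η < g u :=
        (hgc (t k) (htpos k).le).eventually (eventually_gt_nhds (hgt k))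
      rw [Filter.Eventually, Metric.mem_nhdsWithin_iff] at hev
      obtain ⟨δ, hδpos, hδ⟩ := hev
      refine ⟨δ, hδpos, fun u hu1 hu2 => hδ ⟨?_, hu1⟩⟩
      rw [Metric.mem_ball, Real.dist_eq, abs_of_nonneg (by linarith)]
      linarith
    choose δ hδpos hδ using hδex
    -- the Baire category argument
    set V : ℕ → Set ℝ := fun k =>
      ⋃ m : ℕ, Set.Ioo (t k / ((m : ℝ) + 1)) ((t k + δ k) / ((m : ℝ) + 1)) with hVdef
    set U : ℕ → Set ℝ := fun N => Set.Iio 1 ∪ ⋃ k, ⋃ _ : N ≤ k, V k with hUdef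
    have hUopen : ∀ N, IsOpen (U N) := by
      intro N
      refine isOpen_Iio.union (isOpen_iUnion fun k => isOpen_iUnion fun _ =>
        isOpen_iUnion fun m => isOpen_Ioo)
    have hUdense : ∀ N, Dense (U N) := by
      intro N
      rw [Metric.dense_iff]
      intro x r hr
      by_cases hx : x < 1
      · exact ⟨x, Metric.mem_ball_self hr, Or.inl hx⟩
      push_neg at hx
      have hx0 : (0 : ℝ) < x := lt_of_lt_of_le one_pos hx
      set b : ℝ := x + r / 2 with hbdef
      have hxb : x < b := by simp [hbdef]; linarith
      have hb0 : (0 : ℝ) < b := lt_trans hx0 hxb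
      -- choose a large k
      obtain ⟨k1, hk1⟩ := exists_nat_gt (x * b / (r / 2))
      set k : ℕ := max N k1 with hkdef
      have hkN : N ≤ k := le_max_left _ _
      have htk : x * b / (r / 2) < t k := by
        have h1 : (k1 : ℝ) ≤ (k : ℝ) := by exact_mod_cast le_max_right N k1
        have := ht k
        linarith
      have htk0 := htpos k
      -- choose the integer m
      set m : ℕ := Nat.floor (t k / b) with hmdef
      set M : ℝ := (m : ℝ) + 1 with hMdef
      have hM0 : (0 : ℝ) < M := by positivity
      have hMl : t k / b < M := by
        rw [hMdef, hmdef]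
        exact_mod_cast Nat.lt_floor_add_one (t k / b)
      have hMu : M < t k / x := by
        have h1 : (m : ℝ) ≤ t k / b := Nat.floor_le (by positivity)
        have h2 : t k / b + 1 < t k / x := by
          rw [lt_div_iff₀ hx0]
          rw [div_lt_iff₀ (by linarith : (0:ℝ) < r / 2)] at htk
          have h3 : t k / b * b = t k := div_mul_cancel₀ _ hb0.ne'
          have hb : b = x + r / 2 := hbdef
          nlinarith [h3, htk]
        rw [hMdef]; linarith
      set p : ℝ := t k / M with hpdef
      have hp1 : x < p := by
        rw [hpdef, lt_div_iff₀ hM0]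
        calc x * M < x * (t k / x) := by
              exact mul_lt_mul_of_pos_left hMu hx0
          _ = t k := by field_simp
      have hp2 : p < b := by
        rw [hpdef, div_lt_iff₀ hM0]
        calc t k = b * (t k / b) := by field_simp
          _ < b * M := by exact mul_lt_mul_of_pos_left hMl hb0
      set y : ℝ := p + min (r / 2) (δ k / M) / 2 with hydef
      have hmin0 : (0 : ℝ) < min (r / 2) (δ k / M) := by
        refine lt_min (by linarith) (div_pos (hδpos k) hM0)
      have hyp : p < y := by rw [hydef]; linarith
      have hy2 : y < p + δ k / M := by
        have : min (r / 2) (δ k / M) ≤ δ k / M := min_le_right _ _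
        rw [hydef]; linarith [div_pos (hδpos k) hM0]
      have hyr : y < x + r := by
        have h1 : min (r / 2) (δ k / M) ≤ r / 2 := min_le_left _ _
        have h2 : p < x + r / 2 := by rw [hbdef] at hp2; exact hp2
        rw [hydef]; linarith
      refine ⟨y, ?_, Or.inr ?_⟩
      · rw [Metric.mem_ball, Real.dist_eq, abs_of_nonneg (by linarith)]
        linarith
      · refine Set.mem_iUnion.2 ⟨k, Set.mem_iUnion.2 ⟨hkN, Set.mem_iUnion.2 ⟨m, ?_⟩⟩⟩
        constructor
        · exact hpdef ▸ hyp
        · rw [add_div]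
          calc y < p + δ k / M := hy2
            _ = t k / ((m:ℝ)+1) + δ k / ((m:ℝ)+1) := by rw [hpdef, hMdef]
      -- done with density
    have hdense : Dense (⋂ N, U N) := dense_iInter_of_isOpen hUopen hUdense
    obtain ⟨s, hsU, hs1⟩ := hdense.exists_mem_open (isOpen_Ioi (a := (1:ℝ))) Set.nonempty_Ioi
    rw [Set.mem_Ioi] at hs1
    have hs0 : (0 : ℝ) < s := lt_trans one_pos hs1
    have hsconv := hgs s hs0
    obtain ⟨N₀, hN₀⟩ := eventually_atTop.mp (ENNReal.tendsto_nhds_zero.mp hsconv η hη)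
    set N : ℕ := Nat.ceil ((N₀ : ℝ) * s) with hNdef
    have hsUN : s ∈ U N := Set.mem_iInter.mp hsU N
    have hsVN : s ∈ ⋃ k, ⋃ _ : N ≤ k, V k := by
      rcases hsUN with h | h
      · exact absurd h (by simp; linarith)
      · exact h
    obtain ⟨k, hk⟩ := Set.mem_iUnion.mp hsVN
    obtain ⟨hkN, hk2⟩ := Set.mem_iUnion.mp hk
    obtain ⟨m, hm⟩ := Set.mem_iUnion.mp hk2
    obtain ⟨hm1, hm2⟩ := hm
    have hM0 : (0 : ℝ) < (m : ℝ) + 1 := by positivity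
    have hu1 : t k < ((m : ℝ) + 1) * s := by
      rw [div_lt_iff₀ hM0] at hm1; linarith [hm1]
    have hu2 : ((m : ℝ) + 1) * s < t k + δ k := by
      rw [lt_div_iff₀ hM0] at hm2; linarith [hm2]
    have hη2 : η < g (((m : ℝ) + 1) * s) := hδ k _ hu1.le hu2
    have hmge : N₀ ≤ m + 1 := by
      by_contra hlt
      push_neg at hlt
      have h1 : ((m : ℝ) + 1) * s ≤ (N₀ : ℝ) * s := by
        have : ((m : ℝ) + 1) ≤ (N₀ : ℝ) := by exact_mod_cast hlt.le
        exact mul_le_mul_of_nonneg_right this hs0.le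
      have h2 : (N₀ : ℝ) * s ≤ (N : ℝ) := Nat.le_ceil _
      have h3 : (N : ℝ) ≤ (k : ℝ) := by exact_mod_cast hkN
      have := ht k
      linarith
    have := hN₀ (m + 1) hmge
    rw [Nat.cast_add, Nat.cast_one] at this
    exact absurd hη2 (not_lt.mpr this)
  -- Step (d): Markov's inequality transfers the convergence to each `ε`.
  intro ε hε
  set c : ℝ≥0∞ := ENNReal.ofReal (min ε 1) with hcdef
  have hc0 : c ≠ 0 := by
    rw [hcdef]
    simp only [ne_eq, ENNReal.ofReal_eq_zero, not_le]
    exact lt_min hε one_pos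
  have hctop : c ≠ ⊤ := ENNReal.ofReal_ne_top
  have hbound : ∀ t : ℝ, 0 ≤ t → ℙ {ω | ε < |Y t ω - Yinf ω|} ≤ g t * c⁻¹ := by
    intro t ht
    have h1 : ℙ {ω | ε < |Y t ω - Yinf ω|} ≤ ℙ {ω | c ≤ F t ω} := by
      refine measure_mono fun ω hω => ?_
      simp only [Set.mem_setOf_eq] at hω ⊢
      exact ENNReal.ofReal_le_ofReal (min_le_min hω.le le_rfl)
    have h2 : c * ℙ {ω | c ≤ F t ω} ≤ g t :=
      mul_meas_ge_le_lintegral₀ (hFmeas t ht).aemeasurable c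
    calc ℙ {ω | ε < |Y t ω - Yinf ω|} ≤ ℙ {ω | c ≤ F t ω} := h1
      _ = c⁻¹ * (c * ℙ {ω | c ≤ F t ω}) := by
          rw [← mul_assoc, ENNReal.inv_mul_cancel hc0 hctop, one_mul]
      _ ≤ c⁻¹ * g t := mul_le_mul_right h2 _
      _ = g t * c⁻¹ := mul_comm _ _
  have hlim : Tendsto (fun t : ℝ => g t * c⁻¹) atTop (𝓝 0) := by
    have := ENNReal.Tendsto.mul_const key (Or.inr (ENNReal.inv_ne_top.mpr hc0))
    simpa using this
  refine tendsto_of_tendsto_of_tendsto_of_le_of_le' tendsto_const_nhds hlim ?_ ?_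
  · exact Eventually.of_forall fun t => zero_le
  · filter_upwards [eventually_ge_atTop (0 : ℝ)] with t ht
    exact hbound t ht
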